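/- For b ∈ [0.14, 0.19] fixed, the function t ↦ ρ(t) = (-(1-b)² + t²)/√((1 - (b²+t²))² - 4b²t²) is nondecreasing on [0, 0.1]; in particular ρ(t) ≥ ρ(0) = -(1-b)/(1+b) for all t ∈ [0, 0.1]. -/

import Mathlib

noncomputable def rhoT (b t : ℝ) : ℝ :=
  (-(1 - b) ^ 2 + t ^ 2) / Real.sqrt ((1 - (b ^ 2 + t ^ 2)) ^ 2 - 4 * b ^ 2 * t ^ 2)

lemma rhoT_eq (b t : ℝ) (hb : b ∈ Set.Icc (0.14 : ℝ) 0.19)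
    (ht : t ∈ Set.Icc (0 : ℝ) 0.1) :
    rhoT b t = -Real.sqrt (((1 - b) ^ 2 - t ^ 2) / ((1 + b) ^ 2 - t ^ 2)) := by
  obtain ⟨hb1, hb2⟩ := hb
  obtain ⟨ht1, ht2⟩ := ht
  have hN : (0:ℝ) < (1 - b) ^ 2 - t ^ 2 := by nlinarith
  have hM : (0:ℝ) < (1 + b) ^ 2 - t ^ 2 := by nlinarith
  have hD : (1 - (b ^ 2 + t ^ 2)) ^ 2 - 4 * b ^ 2 * t ^ 2
      = ((1 - b) ^ 2 - t ^ 2) * ((1 + b) ^ 2 - t ^ 2) := by ring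
  have hsN := Real.sqrt_pos.mpr hN
  have hsM := Real.sqrt_pos.mpr hM
  rw [rhoT, hD, Real.sqrt_mul hN.le, Real.sqrt_div hN.le]
  have hss : Real.sqrt ((1 - b) ^ 2 - t ^ 2) ^ 2 = (1 - b) ^ 2 - t ^ 2 :=
    Real.sq_sqrt hN.le
  rw [show -(1 - b) ^ 2 + t ^ 2 = -(((1 - b) ^ 2 - t ^ 2)) by ring, neg_div, neg_inj,
    div_eq_div_iff (by positivity) hsM.ne']
  linear_combination (-Real.sqrt ((1 + b) ^ 2 - t ^ 2)) * hss

theorem stmt_10 (b : ℝ) (hb : b ∈ Set.Icc (0.14 : ℝ) 0.19) :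
    MonotoneOn (rhoT b) (Set.Icc (0 : ℝ) 0.1) ∧
    rhoT b 0 = -(1 - b) / (1 + b) ∧
    ∀ t ∈ Set.Icc (0 : ℝ) 0.1, rhoT b t ≥ -(1 - b) / (1 + b) := by
  obtain ⟨hb1, hb2⟩ := hb
  have hmono : MonotoneOn (rhoT b) (Set.Icc (0 : ℝ) 0.1) := by
    intro x hx y hy hxy
    rw [rhoT_eq b x ⟨hb1, hb2⟩ hx, rhoT_eq b y ⟨hb1, hb2⟩ hy]
    have hx1 := hx.1; have hx2 := hx.2
    have hy1 := hy.1; have hy2 := hy.2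
    have hNx : (0:ℝ) < (1 - b) ^ 2 - x ^ 2 := by nlinarith
    have hMx : (0:ℝ) < (1 + b) ^ 2 - x ^ 2 := by nlinarith
    have hNy : (0:ℝ) < (1 - b) ^ 2 - y ^ 2 := by nlinarith
    have hMy : (0:ℝ) < (1 + b) ^ 2 - y ^ 2 := by nlinarith
    have h : ((1 - b) ^ 2 - y ^ 2) / ((1 + b) ^ 2 - y ^ 2)
        ≤ ((1 - b) ^ 2 - x ^ 2) / ((1 + b) ^ 2 - x ^ 2) := by
      rw [div_le_div_iff₀ hMy hMx]
      nlinarith [mul_nonneg (mul_nonneg (by linarith : (0:ℝ) ≤ b) (sub_nonneg.mpr hxy))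
        (by linarith : (0:ℝ) ≤ x + y)]
    exact neg_le_neg (Real.sqrt_le_sqrt h)
  have h0 : rhoT b 0 = -(1 - b) / (1 + b) := by
    rw [rhoT_eq b 0 ⟨hb1, hb2⟩ ⟨le_refl 0, by norm_num⟩]
    have hb' : (0:ℝ) < 1 + b := by linarith
    rw [show ((1 - b) ^ 2 - 0 ^ 2) / ((1 + b) ^ 2 - 0 ^ 2) = ((1 - b) / (1 + b)) ^ 2 by
      field_simp; ring]
    rw [Real.sqrt_sq (div_nonneg (by linarith) (by linarith))]
    ring
  refine ⟨hmono, h0, fun t ht => ?_⟩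
  have := hmono ⟨le_refl 0, by norm_num⟩ ht ht.1
  rw [h0] at this
  exact this
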